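/- Let α = (m/n)·2π be a rational angle (m, n integers, n ≠ 0). Then every complex root of the minimal polynomial over ℚ of the algebraic integer 2 cos α is real and has absolute value at most 2; that is, all conjugates of 2 cos α lie in the interval [-2, 2]. -/

import Mathlib

theorem conjugates_of_two_cos_rational_angle
    (α : ℝ) (m n : ℤ) (hn : n ≠ 0) (hα : α = ((m : ℝ) / (n : ℝ)) * (2 * Real.pi))
    (z : ℂ) (hz : Polynomial.aeval z (minpoly ℚ (2 * Real.cos α)) = 0) :
    z.im = 0 ∧ ‖z‖ ≤ 2 := by
  classical
  set x : ℝ := 2 * Real.cos α with hx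
  -- the polynomial p(X) = T_n(X/2) - 1
  set p : Polynomial ℚ :=
    (Polynomial.Chebyshev.T ℚ n).comp (Polynomial.C (1/2) * Polynomial.X) - 1 with hp
  have hnR : (n : ℝ) ≠ 0 := Int.cast_ne_zero.mpr hn
  -- x is a root of p
  have haevalx : Polynomial.aeval x p = 0 := by
    have h1 : Polynomial.aeval x ((Polynomial.Chebyshev.T ℚ n).comp
        (Polynomial.C (1/2) * Polynomial.X)) = (Polynomial.Chebyshev.T ℝ n).eval (x / 2) := by
      rw [Polynomial.aeval_comp, Polynomial.aeval_def, Polynomial.eval₂_eq_eval_map,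
        Polynomial.Chebyshev.map_T]
      simp
      ring_nf
    have h2 : x / 2 = Real.cos α := by rw [hx]; ring
    have h3 : (n : ℝ) * α = m * (2 * Real.pi) := by
      rw [hα]; field_simp
    rw [hp, map_sub, h1, h2, Polynomial.Chebyshev.T_real_cos, h3]
    have : Real.cos ((m : ℝ) * (2 * Real.pi)) = 1 :=
      (Real.cos_eq_one_iff _).mpr ⟨m, rfl⟩
    simp [this]
  -- hence z is a root of p
  have hdvd : minpoly ℚ x ∣ p := minpoly.dvd ℚ x haevalx
  obtain ⟨q, hq⟩ := hdvd
  have haevalz : Polynomial.aeval z p = 0 := by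
    rw [hq, map_mul, hz, zero_mul]
  -- so T_n(z/2) = 1
  have hT : (Polynomial.Chebyshev.T ℂ n).eval (z / 2) = 1 := by
    have h1 : Polynomial.aeval z ((Polynomial.Chebyshev.T ℚ n).comp
        (Polynomial.C (1/2) * Polynomial.X)) = (Polynomial.Chebyshev.T ℂ n).eval (z / 2) := by
      rw [Polynomial.aeval_comp, Polynomial.aeval_def, Polynomial.eval₂_eq_eval_map,
        Polynomial.Chebyshev.map_T]
      simp
      ring_nf
    rw [hp, map_sub, h1] at haevalz
    simpa using sub_eq_zero.mp haevalz
  -- write z/2 = cos θ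
  obtain ⟨θ, hθ⟩ := Complex.cos_surjective (z / 2)
  rw [← hθ, Polynomial.Chebyshev.T_complex_cos] at hT
  obtain ⟨k, hk⟩ := Complex.cos_eq_one_iff.mp hT
  -- θ = (k * 2π / n : ℝ)
  have hnC : (n : ℂ) ≠ 0 := Int.cast_ne_zero.mpr hn
  have hθval : θ = (((k : ℝ) * (2 * Real.pi) / (n : ℝ) : ℝ) : ℂ) := by
    push_cast
    rw [eq_div_iff hnC]
    linear_combination -hk
  have hzval : z = ((2 * Real.cos ((k : ℝ) * (2 * Real.pi) / (n : ℝ)) : ℝ) : ℂ) := by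
    have : z = 2 * Complex.cos θ := by rw [hθ]; ring
    rw [this, hθval, ← Complex.ofReal_cos]
    push_cast
    ring
  constructor
  · rw [hzval]; exact Complex.ofReal_im _
  · rw [hzval]
    rw [Complex.norm_real, Real.norm_eq_abs]
    have := Real.neg_one_le_cos ((k : ℝ) * (2 * Real.pi) / (n : ℝ))
    have := Real.cos_le_one ((k : ℝ) * (2 * Real.pi) / (n : ℝ))
    rw [abs_le]
    constructor <;> nlinarith
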